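/- arXiv:2203.06352 — 2 statements merged into one kernel-verified Lean document; each statement's English description precedes it below -/
import Mathlib

section
/- Let M, N ∈ ℕ and let φ : ℚ_p → ℂ be a function supported in p^{-N}ℤ_p and constant on each coset of p^{M}ℤ_p. If φ satisfies the refinement equation φ(x) = p Σ_{h ∈ H₀} β_h φ(x/p − h) (with (β_h) ∈ ℓ², the series converging in L²(ℚ_p)), then in fact φ(x) = p Σ_{h ∈ H₀^{(N+1)}} β_h φ(x/p − h); indeed, for every h ∈ H₀ \ H₀^{(N+1)} and every x ∈ ℚ_p one has φ(x/p − h)·1_{p^{-N}ℤ_p}(x) = 0 and the tail sum Σ_{h ∉ H₀^{(N+1)}} β_h φ(x/p − h) vanishes identically. -/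
open MeasureTheory Real Complex

/-- `H₀ = {k p^{-s} : s ∈ ℕ, 0 ≤ k ≤ p^s - 1} ⊆ ℚ_p`, a complete set of representatives
of `ℚ_p/ℤ_p`. -/
def H0 (p : ℕ) [Fact p.Prime] : Set ℚ_[p] :=
  {x | ∃ s k : ℕ, k < p ^ s ∧ x = (k : ℚ_[p]) / (p : ℚ_[p]) ^ s}

/-- `H₀^{(s)} = {k p^{-s} : 0 ≤ k ≤ p^s - 1} ⊆ H₀`. -/
def H0s (p : ℕ) [Fact p.Prime] (s : ℕ) : Set ℚ_[p] :=
  {x | ∃ k : ℕ, k < p ^ s ∧ x = (k : ℚ_[p]) / (p : ℚ_[p]) ^ s}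

lemma H0s_subset_H0 (p : ℕ) [Fact p.Prime] (s : ℕ) : H0s p s ⊆ H0 p := by
  rintro x ⟨k, hk, rfl⟩; exact ⟨s, k, hk, rfl⟩

lemma tsum_subtype_congr {β : Type*} {g : β → ℂ} {s t : Set β} (hst : s ⊆ t)
    (h0 : ∀ y ∈ t, y ∉ s → g y = 0) : ∑' y : t, g y = ∑' y : s, g y := by
  rw [tsum_subtype, tsum_subtype]
  congr 1; funext y
  by_cases hy : y ∈ s
  · rw [Set.indicator_of_mem hy, Set.indicator_of_mem (hst hy)]
  · rw [Set.indicator_of_notMem hy]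
    by_cases hyt : y ∈ t
    · rw [Set.indicator_of_mem hyt, h0 y hyt hy]
    · rw [Set.indicator_of_notMem hyt]

lemma norm_H0s_le (p : ℕ) [Fact p.Prime] (N : ℕ) {h : ℚ_[p]} (hh : h ∈ H0s p (N+1)) :
    ‖h‖ ≤ (p : ℝ) ^ ((N : ℤ) + 1) := by
  obtain ⟨k, hk, rfl⟩ := hh
  have hp1 : (1 : ℝ) < p := by exact_mod_cast (Fact.out : p.Prime).one_lt
  have hp0 : (0 : ℝ) < p := by linarith
  rw [norm_div, Padic.norm_p_pow]
  have hpos : (0:ℝ) < (p : ℝ) ^ (-((N+1 : ℕ)):ℤ) := by positivity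
  rw [div_le_iff₀ hpos]
  have h1 : ‖((k : ℤ) : ℚ_[p])‖ ≤ 1 := Padic.norm_int_le_one _
  push_cast at h1
  calc ‖(k:ℚ_[p])‖ ≤ 1 := h1
    _ = (p:ℝ) ^ ((N:ℤ)+1) * (p:ℝ) ^ (-((N+1 : ℕ)):ℤ) := by
        rw [← zpow_add₀ (ne_of_gt hp0)]
        push_cast
        ring_nf
        norm_num

lemma mem_H0s_of_norm_le (p : ℕ) [Fact p.Prime] (N : ℕ) {h : ℚ_[p]} (hh : h ∈ H0 p)
    (hn : ‖h‖ ≤ (p : ℝ) ^ ((N : ℤ) + 1)) : h ∈ H0s p (N+1) := by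
  obtain ⟨s, k, hk, rfl⟩ := hh
  have hp1 : (1 : ℝ) < p := by exact_mod_cast (Fact.out : p.Prime).one_lt
  have hp0 : (0 : ℝ) < p := by linarith
  have hppos := (Fact.out : p.Prime).pos
  have hpQ : (p : ℚ_[p]) ≠ 0 := by exact_mod_cast (Fact.out : p.Prime).ne_zero
  have hps : ((p : ℚ_[p]) ^ s) ≠ 0 := pow_ne_zero _ hpQ
  have hpN : ((p : ℚ_[p]) ^ (N+1)) ≠ 0 := pow_ne_zero _ hpQ
  by_cases hs : s ≤ N + 1
  · refine ⟨k * p ^ (N + 1 - s), ?_, ?_⟩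
    · calc k * p ^ (N+1-s) < p ^ s * p ^ (N+1-s) :=
            (Nat.mul_lt_mul_right (Nat.pow_pos hppos)).mpr hk
        _ = p ^ (N+1) := by rw [← pow_add, Nat.add_sub_cancel' hs]
    · have hsplit : (p:ℚ_[p])^(N+1) = (p:ℚ_[p])^s * (p:ℚ_[p])^(N+1-s) := by
        rw [← pow_add]; congr 1; omega
      rw [div_eq_div_iff hps hpN]
      push_cast
      rw [hsplit]
      ring
  · push_neg at hs
    rw [norm_div, Padic.norm_p_pow, div_le_iff₀ (by positivity)] at hn
    have hd : ((p:ℤ) ^ (s - (N+1))) ∣ (k : ℤ) := by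
      rw [← Padic.norm_int_le_pow_iff_dvd]
      push_cast
      calc ‖(k:ℚ_[p])‖ ≤ (p:ℝ) ^ ((N:ℤ)+1) * (p:ℝ) ^ (-(s:ℤ)) := hn
        _ = (p:ℝ) ^ (-((s - (N+1) : ℕ) : ℤ)) := by
            rw [← zpow_add₀ (ne_of_gt hp0)]
            congr 1
            omega
    obtain ⟨k', hk'⟩ := hd
    have hk'nn : 0 ≤ k' := by
      by_contra hneg
      push_neg at hneg
      have : (k:ℤ) < 0 := by
        rw [hk']
        exact mul_neg_of_pos_of_neg (by positivity) hneg
      omega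
    lift k' to ℕ using hk'nn
    refine ⟨k', ?_, ?_⟩
    · have h2 : (k:ℤ) < (p:ℤ)^s := by exact_mod_cast hk
      have hsplit : (p:ℤ)^s = (p:ℤ)^(s-(N+1)) * (p:ℤ)^(N+1) := by
        rw [← pow_add]; congr 1; omega
      rw [hk', hsplit] at h2
      have := lt_of_mul_lt_mul_left h2 (by positivity)
      exact_mod_cast this
    · have hkk : (k : ℚ_[p]) = (p:ℚ_[p])^(s-(N+1)) * k' := by
        exact_mod_cast congrArg (fun z : ℤ => (z : ℚ_[p])) hk'
      have hsplitQ : (p:ℚ_[p])^s = (p:ℚ_[p])^(s-(N+1)) * (p:ℚ_[p])^(N+1) := by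
        rw [← pow_add]; congr 1; omega
      rw [div_eq_div_iff hps hpN, hkk, hsplitQ]
      ring

lemma norm_le_of_norm_lt {p : ℕ} [Fact p.Prime] {a b : ℚ_[p]} (h : ‖b‖ < ‖a‖) :
    ‖a‖ ≤ ‖a - b‖ := by
  have h2 := Padic.nonarchimedean (a - b) b
  rw [sub_add_cancel] at h2
  rcases le_max_iff.mp h2 with h3 | h3
  · exact h3
  · linarith


/-- Let `p` be prime, `M, N ∈ ℕ`, and let `φ : ℚ_p → ℂ` be supported in
`p^{-N}ℤ_p` and constant on each coset of `p^Mℤ_p`.  If `φ` satisfies the refinement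
equation `φ(x) = p ∑_{h ∈ H₀} β_h φ(x/p - h)` with `(β_h) ∈ ℓ²`, then in fact
`φ(x) = p ∑_{h ∈ H₀^{(N+1)}} β_h φ(x/p - h)`; indeed for every `h ∈ H₀ \ H₀^{(N+1)}` and
every `x` one has `φ(x/p - h)·1_{p^{-N}ℤ_p}(x) = 0`, and the tail sum
`∑_{h ∉ H₀^{(N+1)}} β_h φ(x/p - h)` vanishes identically. -/
theorem stmt6 (p : ℕ) [Fact p.Prime] (M N : ℕ)
    (φ : ℚ_[p] → ℂ)
    (hsupp : ∀ x : ℚ_[p], φ x ≠ 0 → ‖x‖ ≤ (p : ℝ) ^ (N : ℤ))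
    (hconst : ∀ x y : ℚ_[p], ‖x - y‖ ≤ (p : ℝ) ^ (-(M : ℤ)) → φ x = φ y)
    (β : ℚ_[p] → ℂ)
    (hβ : Summable fun h : H0 p => ‖β (h : ℚ_[p])‖ ^ 2)
    (href : ∀ x : ℚ_[p],
      φ x = p * ∑' h : H0 p, β (h : ℚ_[p]) * φ (x / (p : ℚ_[p]) - (h : ℚ_[p]))) :
    (∀ x : ℚ_[p],
      φ x = p * ∑' h : H0s p (N + 1), β (h : ℚ_[p]) * φ (x / (p : ℚ_[p]) - (h : ℚ_[p]))) ∧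
    (∀ h ∈ H0 p \ H0s p (N + 1), ∀ x : ℚ_[p],
      φ (x / (p : ℚ_[p]) - h) *
        Set.indicator {y : ℚ_[p] | ‖y‖ ≤ (p : ℝ) ^ (N : ℤ)} (fun _ => (1 : ℂ)) x = 0) ∧
    (∀ x : ℚ_[p],
      ∑' h : ↥(H0 p \ H0s p (N + 1)),
        β (h : ℚ_[p]) * φ (x / (p : ℚ_[p]) - (h : ℚ_[p])) = 0) := by
  have hp1 : (1 : ℝ) < p := by exact_mod_cast (Fact.out : p.Prime).one_lt
  have hp0 : (0 : ℝ) < p := by linarith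
  have hnormdiv : ∀ x : ℚ_[p], ‖x / (p : ℚ_[p])‖ = ‖x‖ * p := by
    intro x
    rw [norm_div, Padic.norm_p, div_eq_mul_inv, inv_inv]
  have hpow : (p : ℝ) ^ (N : ℤ) * p = (p : ℝ) ^ ((N : ℤ) + 1) := by
    rw [zpow_add_one₀ (ne_of_gt hp0)]
  -- tail terms vanish on the support
  have vanish_tail : ∀ x : ℚ_[p], ‖x‖ ≤ (p : ℝ) ^ (N : ℤ) →
      ∀ h ∈ H0 p, h ∉ H0s p (N+1) → φ (x / (p : ℚ_[p]) - h) = 0 := by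
    intro x hx h hH0 hHs
    by_contra hne
    have hle := hsupp _ hne
    have hbig : (p : ℝ) ^ ((N : ℤ) + 1) < ‖h‖ := by
      by_contra hle2
      push_neg at hle2
      exact hHs (mem_H0s_of_norm_le p N hH0 hle2)
    have hxp : ‖x / (p : ℚ_[p])‖ < ‖h‖ := by
      rw [hnormdiv]
      calc ‖x‖ * p ≤ (p : ℝ) ^ (N : ℤ) * p := by gcongr
        _ = (p : ℝ) ^ ((N : ℤ) + 1) := hpow
        _ < ‖h‖ := hbig
    have h2 : ‖h‖ ≤ ‖h - x / (p : ℚ_[p])‖ := norm_le_of_norm_lt hxp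
    rw [norm_sub_rev] at h2
    have h3 : (p:ℝ) ^ (N:ℤ) < (p:ℝ) ^ ((N:ℤ)+1) := by
      apply zpow_lt_zpow_right₀ hp1
      omega
    linarith
  -- terms with small h vanish off the support
  have vanish_small : ∀ x : ℚ_[p], ¬ ‖x‖ ≤ (p : ℝ) ^ (N : ℤ) →
      ∀ h : ℚ_[p], ‖h‖ ≤ (p : ℝ) ^ ((N : ℤ) + 1) → φ (x / (p : ℚ_[p]) - h) = 0 := by
    intro x hx h hh
    by_contra hne
    have hle := hsupp _ hne
    push_neg at hx
    have hxp : ‖h‖ < ‖x / (p : ℚ_[p])‖ := by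
      rw [hnormdiv]
      calc ‖h‖ ≤ (p : ℝ) ^ ((N : ℤ) + 1) := hh
        _ = (p : ℝ) ^ (N : ℤ) * p := hpow.symm
        _ < ‖x‖ * p := by gcongr
    have h2 : ‖x / (p : ℚ_[p])‖ ≤ ‖x / (p : ℚ_[p]) - h‖ := norm_le_of_norm_lt hxp
    rw [hnormdiv] at h2
    have hxpos : (0:ℝ) < ‖x‖ := lt_trans (zpow_pos hp0 _) hx
    nlinarith [hle, h2, hxpos, hp1]
  refine ⟨?_, ?_, ?_⟩
  · intro x
    by_cases hx : ‖x‖ ≤ (p : ℝ) ^ (N : ℤ)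
    · rw [href x]
      congr 1
      exact tsum_subtype_congr (g := fun y => β y * φ (x / (p:ℚ_[p]) - y)) (H0s_subset_H0 p (N+1))
        (fun y hy hyn => by rw [vanish_tail x hx y hy hyn, mul_zero])
    · have hφ : φ x = 0 := by
        by_contra h
        exact hx (hsupp x h)
      rw [hφ]
      have hz : ∀ h : ↥(H0s p (N+1)),
          β (h : ℚ_[p]) * φ (x / (p : ℚ_[p]) - (h : ℚ_[p])) = 0 := fun h => by
        rw [vanish_small x hx _ (norm_H0s_le p N h.2), mul_zero]
      rw [tsum_congr hz, tsum_zero, mul_zero]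
  · rintro h ⟨hH0, hHs⟩ x
    by_cases hx : x ∈ {y : ℚ_[p] | ‖y‖ ≤ (p : ℝ) ^ (N : ℤ)}
    · rw [vanish_tail x hx h hH0 hHs, zero_mul]
    · rw [Set.indicator_of_notMem hx, mul_zero]
  · intro x
    by_cases hx : ‖x‖ ≤ (p : ℝ) ^ (N : ℤ)
    · have hz : ∀ h : ↥(H0 p \ H0s p (N+1)),
          β (h : ℚ_[p]) * φ (x / (p : ℚ_[p]) - (h : ℚ_[p])) = 0 := fun h => by
        rw [vanish_tail x hx _ h.2.1 h.2.2, mul_zero]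
      rw [tsum_congr hz, tsum_zero]
    · have hφ : φ x = 0 := by
        by_contra h
        exact hx (hsupp x h)
      have heq : ∑' h : ↥(H0 p \ H0s p (N+1)),
          β (h : ℚ_[p]) * φ (x / (p : ℚ_[p]) - (h : ℚ_[p]))
          = ∑' h : H0 p, β (h : ℚ_[p]) * φ (x / (p : ℚ_[p]) - (h : ℚ_[p])) := by
        refine (tsum_subtype_congr (g := fun y => β y * φ (x / (p:ℚ_[p]) - y)) Set.diff_subset ?_).symm
        intro y hy hyn
        have hys : y ∈ H0s p (N+1) := by
          by_contra hc
          exact hyn ⟨hy, hc⟩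
        rw [vanish_small x hx _ (norm_H0s_le p N hys), mul_zero]
      rw [heq]
      have := href x
      rw [hφ] at this
      have hpC : (p : ℂ) ≠ 0 := by
        exact_mod_cast (Fact.out : p.Prime).ne_zero
      rcases mul_eq_zero.mp this.symm with h | h
      · exact absurd h hpC
      · exact h
end

section
/- Let M, N ∈ ℕ, let φ ∈ L¹(ℚ_p) ∩ L²(ℚ_p), and let m₀ : ℚ_p → ℂ be a function with m₀(u) = 1 for all u ∈ p^{N}ℤ_p. Suppose the Fourier transform φ̂ satisfies the refinement relation φ̂(u) = m₀(u) · φ̂(p·u) for all u ∈ ℚ_p, φ̂ is constant on each coset of p^{N}ℤ_p, and φ̂(0) = 1. Then for every u ∈ p^{-(M+1)}ℤ_p one has the finite product formula φ̂(u) = Π_{k=0}^{N+M} m₀(p^{k} u). -/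
open MeasureTheory Real Complex

/-- The Fourier transform `f̂(u) = ∫ f(x) conj(e(u·x)) dμ(x)` of `f ∈ L¹(ℚ_p)`, with
respect to the Haar measure `μ` and the standard character `e`. -/
noncomputable def ftrans (p : ℕ) [Fact p.Prime] [MeasurableSpace ℚ_[p]]
    (μ : Measure ℚ_[p]) (e : ℚ_[p] → ℂ) (f : ℚ_[p] → ℂ) (u : ℚ_[p]) : ℂ :=
  ∫ x, f x * (starRingEnd ℂ) (e (u * x)) ∂μ

/-- Let `p` be prime, `μ` the Haar measure on `(ℚ_p, +)` with
`μ(ℤ_p) = 1`, `e` the standard additive character.  Let `M, N ∈ ℕ`,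
`φ ∈ L¹(ℚ_p) ∩ L²(ℚ_p)`, and `m₀ : ℚ_p → ℂ` with `m₀ = 1` on `p^Nℤ_p`.  Suppose
`φ̂(u) = m₀(u)·φ̂(pu)` for all `u`, `φ̂` is constant on each coset of `p^Nℤ_p`, and
`φ̂(0) = 1`.  Then for every `u ∈ p^{-(M+1)}ℤ_p`,
`φ̂(u) = ∏_{k=0}^{N+M} m₀(p^k u)`. -/
theorem stmt16 (p : ℕ) [Fact p.Prime] [MeasurableSpace ℚ_[p]] [BorelSpace ℚ_[p]]
    (μ : Measure ℚ_[p]) [μ.IsAddHaarMeasure]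
    (hμ : μ {x : ℚ_[p] | ‖x‖ ≤ 1} = 1)
    (e : ℚ_[p] → ℂ) (he_cont : Continuous e)
    (he : ∀ (k : ℤ) (s : ℕ),
      e ((k : ℚ_[p]) / (p : ℚ_[p]) ^ s) =
        Complex.exp (2 * (Real.pi : ℂ) * Complex.I * (k : ℂ) / (p : ℂ) ^ s))
    (M N : ℕ) (φ : ℚ_[p] → ℂ) (hφ1 : Integrable φ μ) (hφ2 : MemLp φ 2 μ)
    (m₀ : ℚ_[p] → ℂ)
    (hm₀ : ∀ u : ℚ_[p], ‖u‖ ≤ (p : ℝ) ^ (-(N : ℤ)) → m₀ u = 1)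
    (hrefine : ∀ u : ℚ_[p],
      ftrans p μ e φ u = m₀ u * ftrans p μ e φ ((p : ℚ_[p]) * u))
    (hconst : ∀ u v : ℚ_[p], ‖u - v‖ ≤ (p : ℝ) ^ (-(N : ℤ)) →
      ftrans p μ e φ u = ftrans p μ e φ v)
    (hzero : ftrans p μ e φ 0 = 1) :
    ∀ u : ℚ_[p], ‖u‖ ≤ (p : ℝ) ^ ((M : ℤ) + 1) →
      ftrans p μ e φ u = ∏ k ∈ Finset.range (N + M + 1), m₀ ((p : ℚ_[p]) ^ k * u) := by
  intro u hu
  have key : ∀ n : ℕ, ftrans p μ e φ u =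
      (∏ k ∈ Finset.range n, m₀ ((p : ℚ_[p]) ^ k * u)) *
        ftrans p μ e φ ((p : ℚ_[p]) ^ n * u) := by
    intro n
    induction n with
    | zero => simp
    | succ n ih =>
      rw [ih, hrefine ((p : ℚ_[p]) ^ n * u), Finset.prod_range_succ]
      rw [show (p:ℚ_[p]) * ((p:ℚ_[p])^n * u) = (p:ℚ_[p])^(n+1)*u by ring]; ring
  have hn : ftrans p μ e φ ((p : ℚ_[p]) ^ (N + M + 1) * u) = 1 := by
    have hnorm : ‖(p : ℚ_[p]) ^ (N + M + 1) * u - 0‖ ≤ (p : ℝ) ^ (-(N : ℤ)) := by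
      rw [sub_zero, norm_mul, norm_pow, Padic.norm_p]
      have hp1 : (1 : ℝ) < (p : ℝ) := by
        exact_mod_cast (Fact.out : p.Prime).one_lt
      have hp0 : (0 : ℝ) < (p : ℝ) := lt_trans one_pos hp1
      calc ((p : ℝ)⁻¹) ^ (N + M + 1) * ‖u‖
          ≤ ((p : ℝ)⁻¹) ^ (N + M + 1) * (p : ℝ) ^ ((M : ℤ) + 1) := by
            apply mul_le_mul_of_nonneg_left hu
            positivity
        _ = (p : ℝ) ^ (-(N : ℤ)) := by
            rw [← zpow_natCast ((p : ℝ)⁻¹) (N + M + 1), inv_zpow, ← zpow_neg,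
              ← zpow_add₀ (ne_of_gt hp0)]
            congr 1
            push_cast
            ring
    rw [hconst _ 0 hnorm, hzero]
  rw [key (N + M + 1), hn, mul_one]
end
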